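/- Let P be a profile of strict weak orders on candidate set C containing at least one strict total order, and suppose a truth assignment on variables {xy : x,y ∈ C, x ≠ y} satisfies: (1) for every vote V in P and all distinct a,b,c with a ≻ b and c ≻ b in V, the clauses (ba ∨ cb) and (ab ∨ bc) hold; (2) for every distinct pair a,b, exactly one of ab and ba is true. Then the binary relation A = {(a,b) : ab is true} is a strict total order on C and serves as an axis with respect to which P is possibly single-peaked. -/

import Mathlib

def VValley {C : Type*} (A V : C → C → Prop) : Prop :=
  ∃ c1 c2 c3 : C, A c1 c2 ∧ A c2 c3 ∧ V c1 c2 ∧ V c3 c2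

def UValley {C : Type*} (A V : C → C → Prop) : Prop :=
  ∃ a b c d : C, a ≠ b ∧ a ≠ c ∧ a ≠ d ∧ b ≠ c ∧ b ≠ d ∧ c ≠ d ∧
    A a b ∧ A b d ∧ A a c ∧ A c d ∧ V a b ∧ V d c

def Extends {C : Type*} (V T : C → C → Prop) : Prop :=
  ∀ x y, V x y → T x y

/-- `V` is a strict partial order: asymmetric and transitive. -/
def IsSPO {C : Type*} (V : C → C → Prop) : Prop :=
  (∀ x y, V x y → ¬ V y x) ∧ (∀ x y z, V x y → V y z → V x z)

/-- `V` is a strict weak order: a strict partial order with transitive incomparability. -/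
def IsSWO {C : Type*} (V : C → C → Prop) : Prop :=
  IsSPO V ∧ ∀ x y z, (¬ V x y ∧ ¬ V y x) → (¬ V y z ∧ ¬ V z y) → (¬ V x z ∧ ¬ V z x)

/-- `V` possibly single-peaked w.r.t. axis `A`: it extends to a total order with no v-valley. -/
def PossSP {C : Type*} (A V : C → C → Prop) : Prop :=
  ∃ T : C → C → Prop, IsStrictTotalOrder C T ∧ Extends V T ∧ ¬ VValley A T

lemma exists_ext {C : Type*} (A V : C → C → Prop)
    (hA : IsStrictTotalOrder C A) (hV : IsSWO V) (hnv : ¬ VValley A V) :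
    PossSP A V := by
  classical
  obtain ⟨⟨Vasym, Vtrans⟩, Vtie⟩ := hV
  have Atri : ∀ x y : C, A x y ∨ x = y ∨ A y x := fun x y => by
    have := hA.trichotomous x y; tauto
  have Atrans : ∀ {x y z : C}, A x y → A y z → A x z :=
    fun h h' => hA.toIsStrictOrder.toIsTrans.trans _ _ _ h h'
  have Airr : ∀ x : C, ¬ A x x := fun x => by haveI := hA; exact irrefl_of A x
  have Aasym : ∀ {x y : C}, A x y → A y x → False :=
    fun h h' => Airr _ (Atrans h h')
  have lemL : ∀ {x y z : C}, V x y → ¬ V y z → ¬ V z y → V x z := by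
    intro x y z hxy hyz hzy
    by_contra hxz
    by_cases hzx : V z x
    · exact hzy (Vtrans _ _ _ hzx hxy)
    · exact (Vtie x z y ⟨hxz, hzx⟩ ⟨hzy, hyz⟩).1 hxy
  have lemR : ∀ {x y z : C}, ¬ V x y → ¬ V y x → V y z → V x z := by
    intro x y z hxy hyx hyz
    by_contra hxz
    by_cases hzx : V z x
    · exact hyx (Vtrans _ _ _ hyz hzx)
    · exact (Vtie y x z ⟨hyx, hxy⟩ ⟨hxz, hzx⟩).1 hyz
  set R : C → Prop := fun x => ∃ s, V s x ∧ A s x with hRdef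
  set B : C → C → Prop := fun x y => (R y ∧ A x y) ∨ (¬ R x ∧ A y x) with hBdef
  have Basym : ∀ {x y : C}, B x y → B y x → False := by
    intro x y h h'
    rcases h with ⟨hRy, hxy⟩ | ⟨hnRx, hyx⟩ <;> rcases h' with ⟨hRx, hyx'⟩ | ⟨hnRy, hxy'⟩
    · exact Aasym hxy hyx'
    · exact hnRy hRy
    · exact hnRx hRx
    · exact Aasym hxy' hyx
  have Btrans : ∀ {x y z : C}, x ≠ z → B x y → B y z → B x z := by
    intro x y z hxz h h'
    rcases h with ⟨hRy, hxy⟩ | ⟨hnRx, hyx⟩ <;> rcases h' with ⟨hRz, hyz⟩ | ⟨hnRy, hzy⟩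
    · exact Or.inl ⟨hRz, Atrans hxy hyz⟩
    · exact absurd hRy hnRy
    · rcases Atri x z with h₃ | h₃ | h₃
      · exact Or.inl ⟨hRz, h₃⟩
      · exact absurd h₃ hxz
      · exact Or.inr ⟨hnRx, h₃⟩
    · exact Or.inr ⟨hnRx, Atrans hzy hyx⟩
  refine ⟨fun x y => V x y ∨ (¬ V x y ∧ ¬ V y x ∧ x ≠ y ∧ B x y), ?_, ?_, ?_⟩
  · refine { trichotomous := ?_, irrefl := ?_, trans := ?_ }
    · intro x y hn1 hn2
      refine (?_ : _ ∨ x = y ∨ _).elim (fun h => absurd h hn1) (fun h => h.elim id (fun h => absurd h hn2))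
      by_cases hxy : x = y
      · exact Or.inr (Or.inl hxy)
      by_cases hV1 : V x y
      · exact Or.inl (Or.inl hV1)
      by_cases hV2 : V y x
      · exact Or.inr (Or.inr (Or.inl hV2))
      rcases Atri x y with hAxy | heq | hAyx
      · by_cases hRy : R y
        · exact Or.inl (Or.inr ⟨hV1, hV2, hxy, Or.inl ⟨hRy, hAxy⟩⟩)
        · exact Or.inr (Or.inr (Or.inr ⟨hV2, hV1, Ne.symm hxy, Or.inr ⟨hRy, hAxy⟩⟩))
      · exact absurd heq hxy
      · by_cases hRx : R x
        · exact Or.inr (Or.inr (Or.inr ⟨hV2, hV1, Ne.symm hxy, Or.inl ⟨hRx, hAyx⟩⟩))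
        · exact Or.inl (Or.inr ⟨hV1, hV2, hxy, Or.inr ⟨hRx, hAyx⟩⟩)
    · rintro x (h | ⟨_, _, hne, _⟩)
      · exact Vasym x x h h
      · exact hne rfl
    · rintro x y z (hV1 | ⟨n1, n2, hne, hB⟩) (hV2 | ⟨n3, n4, hne', hB'⟩)
      · exact Or.inl (Vtrans _ _ _ hV1 hV2)
      · exact Or.inl (lemL hV1 n3 n4)
      · exact Or.inl (lemR n1 n2 hV2)
      · by_cases hxz : x = z
        · subst hxz
          exact (Basym hB hB').elim
        · have htie := Vtie x y z ⟨n1, n2⟩ ⟨n3, n4⟩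
          exact Or.inr ⟨htie.1, htie.2, hxz, Btrans hxz hB hB'⟩
  · exact fun x y h => Or.inl h
  · rintro ⟨c1, c2, c3, hA12, hA23, hT12, hT32⟩
    rcases hT32 with hV32 | ⟨n1, n2, hne32, hB32⟩
    · rcases hT12 with hV12 | ⟨m1, m2, hne12, hB12⟩
      · exact hnv ⟨c1, c2, c3, hA12, hA23, hV12, hV32⟩
      · rcases hB12 with ⟨⟨s, hs1, hs2⟩, _⟩ | ⟨_, h21⟩
        · exact hnv ⟨s, c2, c3, hs2, hA23, hs1, hV32⟩
        · exact Aasym hA12 h21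
    · rcases hB32 with ⟨hR2, h32⟩ | ⟨hnR3, h23⟩
      · exact Aasym hA23 h32
      · rcases hT12 with hV12 | ⟨m1, m2, hne12, hB12⟩
        · exact hnR3 ⟨c1, lemL hV12 n2 n1, Atrans hA12 hA23⟩
        · rcases hB12 with ⟨⟨s, hs1, hs2⟩, _⟩ | ⟨_, h21⟩
          · exact hnR3 ⟨s, lemL hs1 n2 n1, Atrans hs2 hA23⟩
          · exact Aasym hA12 h21

theorem stmt17 {C : Type*} [Fintype C] (n : ℕ) (V : Fin n → C → C → Prop)
    (hV : ∀ i, IsSWO (V i))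
    (i0 : Fin n) (htotal : ∀ x y : C, x ≠ y → V i0 x y ∨ V i0 y x)
    (f : C → C → Bool)
    (h1 : ∀ i, ∀ a b c : C, a ≠ b → a ≠ c → b ≠ c → V i a b → V i c b →
      (f b a = true ∨ f c b = true) ∧ (f a b = true ∨ f b c = true))
    (h2 : ∀ a b : C, a ≠ b → Xor' (f a b = true) (f b a = true)) :
    IsStrictTotalOrder C (fun a b : C => a ≠ b ∧ f a b = true) ∧
    ∀ i, PossSP (fun a b : C => a ≠ b ∧ f a b = true) (V i) := by
  classical
  have xorR : ∀ {a b : C}, a ≠ b → f a b = true → ¬ f b a = true := by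
    intro a b hab hfab hfba
    rcases h2 a b hab with ⟨_, h⟩ | ⟨_, h⟩
    · exact h hfba
    · exact h hfab
  have xorL : ∀ {a b : C}, a ≠ b → ¬ f a b = true → f b a = true := by
    intro a b hab hfab
    rcases h2 a b hab with ⟨h, _⟩ | ⟨h, _⟩
    · exact absurd h hfab
    · exact h
  have hAsto : IsStrictTotalOrder C (fun a b : C => a ≠ b ∧ f a b = true) := by
    refine { trichotomous := ?_, irrefl := ?_, trans := ?_ }
    · intro a b hn1 hn2
      refine (?_ : _ ∨ a = b ∨ _).elim (fun h => absurd h hn1) (fun h => h.elim id (fun h => absurd h hn2))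
      by_cases hab : a = b
      · exact Or.inr (Or.inl hab)
      · rcases h2 a b hab with ⟨hf, _⟩ | ⟨hf, _⟩
        · exact Or.inl ⟨hab, hf⟩
        · exact Or.inr (Or.inr ⟨Ne.symm hab, hf⟩)
    · rintro a ⟨h, _⟩; exact h rfl
    · rintro a b c ⟨hab, fab⟩ ⟨hbc, fbc⟩
      have hac : a ≠ c := by
        rintro rfl
        exact xorR hab fab fbc
      refine ⟨hac, ?_⟩
      by_contra hfac
      have fca : f c a = true := xorL hac hfac
      have nfba : ¬ f b a = true := xorR hab fab
      have nfcb : ¬ f c b = true := xorR hbc fbc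
      have Wasym := (hV i0).1.1
      have Wtrans := (hV i0).1.2
      have botc : V i0 a c → V i0 b c → False := by
        intro ha hb
        rcases (h1 i0 a c b hac hab (Ne.symm hbc) ha hb).2 with h | h
        · exact hfac h
        · exact nfcb h
      have botb : V i0 a b → V i0 c b → False := by
        intro ha hc
        rcases (h1 i0 a b c hab hac hbc ha hc).1 with h | h
        · exact nfba h
        · exact nfcb h
      have bota : V i0 b a → V i0 c a → False := by
        intro hb hc
        rcases (h1 i0 b a c (Ne.symm hab) hbc hac hb hc).2 with h | h
        · exact nfba h
        · exact hfac h
      rcases htotal a b hab with h₁ | h₁ <;> rcases htotal b c hbc with h₂ | h₂ <;>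
        rcases htotal a c hac with h₃ | h₃
      · exact botc h₃ h₂
      · exact Wasym _ _ (Wtrans _ _ _ h₁ h₂) h₃
      · exact botb h₁ h₂
      · exact botb h₁ h₂
      · exact botc h₃ h₂
      · exact bota h₁ h₃
      · exact Wasym _ _ (Wtrans _ _ _ h₂ h₁) h₃
      · exact bota h₁ h₃
  refine ⟨hAsto, fun i => exists_ext _ _ hAsto (hV i) ?_⟩
  rintro ⟨c1, c2, c3, ⟨h12, f12⟩, ⟨h23, f23⟩, V12, V32⟩
  have h13 : c1 ≠ c3 := by
    rintro rfl
    exact xorR h12 f12 f23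
  rcases (h1 i c1 c2 c3 h12 h13 h23 V12 V32).1 with h | h
  · exact xorR h12 f12 h
  · exact xorR h23 f23 h
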